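/- Let p be an odd prime, k ∈ F_p with k ≠ 0, and let f be a monic irreducible polynomial of degree n over F_p with f ∉ {x, x+1, x-1}. Let α ∈ F_{p^n} be a root of f. If the set of roots of f (in F_{p^n}) is not closed under inversion, then the minimal polynomial of k·(α + α⁻¹) over F_p has degree n. -/

import Mathlib

open Polynomial IntermediateField

theorem minpoly_theta_natDegree_of_not_inverse_closed (p n : ℕ) [Fact p.Prime]
    (hodd : Odd p) (k : ZMod p) (hk : k ≠ 0)
    (f : Polynomial (ZMod p)) (hmonic : f.Monic) (hirr : Irreducible f)
    (hdeg : f.natDegree = n)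
    (hne1 : f ≠ Polynomial.X) (hne2 : f ≠ Polynomial.X + 1)
    (hne3 : f ≠ Polynomial.X - 1)
    (α : GaloisField p n) (hroot : Polynomial.aeval α f = 0)
    (hnotinv : ¬ ∀ γ : GaloisField p n,
      Polynomial.aeval γ f = 0 → Polynomial.aeval γ⁻¹ f = 0) :
    (minpoly (ZMod p)
      (algebraMap (ZMod p) (GaloisField p n) k * (α + α⁻¹))).natDegree = n := by
  classical
  have hp1 : 1 < p := (Fact.out : p.Prime).one_lt
  have hfmin : ∀ γ : GaloisField p n, Polynomial.aeval γ f = 0 →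
      minpoly (ZMod p) γ = f := fun γ hγ =>
    (minpoly.eq_of_irreducible_of_monic hirr hγ hmonic).symm
  have hne0 : ∀ γ : GaloisField p n, Polynomial.aeval γ f = 0 → γ ≠ 0 := by
    intro γ hγ h0
    apply hne1
    rw [← hfmin γ hγ, h0]
    simpa using minpoly.eq_X_sub_C (GaloisField p n) (0 : ZMod p)
  have hα0 : α ≠ 0 := hne0 α hroot
  have hn0 : n ≠ 0 := by
    rw [← hdeg]; exact hirr.natDegree_pos.ne'
  have hfinrank : Module.finrank (ZMod p) (GaloisField p n) = n := GaloisField.finrank p hn0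
  set θ : GaloisField p n := algebraMap (ZMod p) (GaloisField p n) k * (α + α⁻¹) with hθ
  set m := (minpoly (ZMod p) θ).natDegree with hm
  have hθint : IsIntegral (ZMod p) θ := IsIntegral.of_finite (ZMod p) θ
  have hαint : IsIntegral (ZMod p) α := IsIntegral.of_finite (ZMod p) α
  have hmn : m ≤ n := hfinrank ▸ minpoly.natDegree_le θ
  by_contra hne
  have hmlt : m < n := lt_of_le_of_ne hmn hne
  have hm0 : m ≠ 0 := (minpoly.natDegree_pos hθint).ne'
  -- θ is fixed by the m-th power of Frobenius
  have hθfix : θ ^ p ^ m = θ := by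
    have hE : Module.finrank (ZMod p) (ZMod p)⟮θ⟯ = m := IntermediateField.adjoin.finrank hθint
    have : Fintype (ZMod p)⟮θ⟯ := Fintype.ofFinite _
    have hcard : Fintype.card (ZMod p)⟮θ⟯ = p ^ m := by
      rw [Module.card_eq_pow_finrank (K := ZMod p), ZMod.card, hE]
    have h1 := FiniteField.pow_card (IntermediateField.AdjoinSimple.gen (ZMod p) θ)
    rw [hcard] at h1
    have h2 := congrArg (algebraMap (ZMod p)⟮θ⟯ (GaloisField p n)) h1
    rwa [map_pow, IntermediateField.AdjoinSimple.algebraMap_gen] at h2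
  -- the Frobenius power as an algebra endomorphism
  let φ : GaloisField p n →ₐ[ZMod p] GaloisField p n :=
    { toFun := fun x => x ^ p ^ m
      map_one' := one_pow _
      map_mul' := fun x y => mul_pow x y _
      map_zero' := zero_pow (pow_ne_zero m (Fact.out : p.Prime).ne_zero)
      map_add' := fun x y => add_pow_char_pow x y p m
      commutes' := fun c => by
        show algebraMap (ZMod p) (GaloisField p n) c ^ p ^ m
          = algebraMap (ZMod p) (GaloisField p n) c
        rw [← map_pow, ZMod.pow_card_pow] }
  have hφ : ∀ x : GaloisField p n, φ x = x ^ p ^ m := fun _ => rfl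
  have hkF : algebraMap (ZMod p) (GaloisField p n) k ≠ 0 :=
    (map_ne_zero_iff _ (algebraMap (ZMod p) (GaloisField p n)).injective).mpr hk
  have hβ : α ^ p ^ m + (α ^ p ^ m)⁻¹ = α + α⁻¹ := by
    have h1 : φ θ = θ := hθfix
    rw [hθ, map_mul, map_add, AlgHom.commutes, map_inv₀] at h1
    have h2 := mul_left_cancel₀ hkF h1
    rwa [hφ] at h2
  set β := α ^ p ^ m with hβdef
  have hβ0 : β ≠ 0 := pow_ne_zero _ hα0
  have hcases : β = α ∨ β = α⁻¹ := by
    have h3 : (β - α) * (α * β - 1) = 0 := by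
      have h4 : β + β⁻¹ = α + α⁻¹ := hβ
      field_simp at h4
      linear_combination h4
    rcases mul_eq_zero.mp h3 with h | h
    · left; exact sub_eq_zero.mp h
    · right
      have h1 : α * β = 1 := by rw [← sub_eq_zero]; exact h
      exact eq_inv_of_mul_eq_one_right (mul_comm α β ▸ h1)
  -- β = α is impossible since α generates the field and m < n
  have hβinv : β = α⁻¹ := by
    rcases hcases with h | h
    · exfalso
      have hfixall : ∀ x : GaloisField p n, x ^ p ^ m = x := by
        have hT : ((ZMod p)⟮α⟯ : IntermediateField (ZMod p) (GaloisField p n))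
            ≤ (AlgHom.equalizer φ (AlgHom.id (ZMod p) (GaloisField p n))).toIntermediateField
            (fun y hy => by
              simp only [AlgHom.mem_equalizer, AlgHom.id_apply] at hy ⊢
              rw [map_inv₀, hy]) := by
          rw [IntermediateField.adjoin_simple_le_iff]
          show φ α = α
          rw [hφ]; exact h
        have hadj : Module.finrank (ZMod p) (ZMod p)⟮α⟯
            = Module.finrank (ZMod p) (GaloisField p n) := by
          rw [IntermediateField.adjoin.finrank hαint, hfmin α hroot, hdeg, hfinrank]
        intro x
        have hx : x ∈ (ZMod p)⟮α⟯ := by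
          have h5 : ((ZMod p)⟮α⟯ : IntermediateField (ZMod p) (GaloisField p n)).toSubalgebra.toSubmodule = ⊤ :=
            Submodule.eq_top_of_finrank_eq hadj
          have : x ∈ ((ZMod p)⟮α⟯ : IntermediateField (ZMod p) (GaloisField p n)).toSubalgebra.toSubmodule := by
            rw [h5]; trivial
          exact this
        exact hT hx
      have : Fintype (GaloisField p n) := Fintype.ofFinite _
      have hg : (X ^ p ^ m - X : (GaloisField p n)[X]) ≠ 0 :=
        FiniteField.X_pow_card_pow_sub_X_ne_zero (GaloisField p n) hm0 hp1
      have hgdeg : (X ^ p ^ m - X : (GaloisField p n)[X]).natDegree = p ^ m :=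
        FiniteField.X_pow_card_pow_sub_X_natDegree_eq (GaloisField p n) hm0 hp1
      have hsub : (Finset.univ : Finset (GaloisField p n))
          ⊆ (X ^ p ^ m - X : (GaloisField p n)[X]).roots.toFinset := by
        intro x _
        rw [Multiset.mem_toFinset, Polynomial.mem_roots hg]
        simp [sub_eq_zero, hfixall x]
      have hle : Fintype.card (GaloisField p n) ≤ p ^ m := by
        calc Fintype.card (GaloisField p n)
            = (Finset.univ : Finset (GaloisField p n)).card := rfl
          _ ≤ (X ^ p ^ m - X : (GaloisField p n)[X]).roots.toFinset.card :=
              Finset.card_le_card hsub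
          _ ≤ Multiset.card (X ^ p ^ m - X : (GaloisField p n)[X]).roots :=
              Multiset.toFinset_card_le _
          _ ≤ (X ^ p ^ m - X : (GaloisField p n)[X]).natDegree := Polynomial.card_roots' _
          _ = p ^ m := hgdeg
      have hcardF : Fintype.card (GaloisField p n) = p ^ n := by
        rw [← Nat.card_eq_fintype_card, GaloisField.card p n hn0]
      rw [hcardF] at hle
      exact absurd ((Nat.pow_le_pow_iff_right hp1).mp hle) (not_le.mpr hmlt)
    · exact h
  -- now every root's inverse is a root: contradiction with hnotinv
  apply hnotinv
  intro γ hγ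
  haveI : Fact (Irreducible f) := ⟨hirr⟩
  have hf0 : f ≠ 0 := hirr.ne_zero
  haveI : Module.Finite (ZMod p) (AdjoinRoot f) := (AdjoinRoot.powerBasis hf0).finite
  let ψα : AdjoinRoot f →ₐ[ZMod p] GaloisField p n := AdjoinRoot.liftAlgHom f (Algebra.ofId _ _) α hroot
  let ψγ : AdjoinRoot f →ₐ[ZMod p] GaloisField p n := AdjoinRoot.liftAlgHom f (Algebra.ofId _ _) γ hγ
  have hinj : Function.Injective ψα := ψα.toRingHom.injective
  have hbij : Function.Bijective ψα := by
    refine ⟨hinj, ?_⟩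
    have hfr : Module.finrank (ZMod p) (AdjoinRoot f)
        = Module.finrank (ZMod p) (GaloisField p n) := by
      rw [(AdjoinRoot.powerBasis hf0).finrank, AdjoinRoot.powerBasis_dim, hdeg, hfinrank]
    exact (LinearMap.injective_iff_surjective_of_finrank_eq_finrank (f := ψα.toLinearMap) hfr).mp hinj
  let e := AlgEquiv.ofBijective ψα hbij
  let σ : GaloisField p n →ₐ[ZMod p] GaloisField p n := ψγ.comp e.symm.toAlgHom
  have h0 : e (AdjoinRoot.root f) = α := by
    show (AdjoinRoot.liftAlgHom f (Algebra.ofId _ _) α hroot) (AdjoinRoot.root f) = α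
    apply AdjoinRoot.liftAlgHom_root
  have h1 : e.symm α = AdjoinRoot.root f := by rw [← h0, AlgEquiv.symm_apply_apply]
  have hσα : σ α = γ := by
    show (AdjoinRoot.liftAlgHom f (Algebra.ofId _ _) γ hγ) (e.symm α) = γ
    rw [h1]
    apply AdjoinRoot.liftAlgHom_root
  have hγpow : γ ^ p ^ m = γ⁻¹ := by
    rw [← hσα, ← map_pow, ← hβdef, hβinv, map_inv₀]
  rw [← hγpow]
  have h2 := Polynomial.aeval_algHom_apply φ γ f
  rw [hγ, map_zero] at h2
  rw [← hφ γ, ← h2]
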